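/- Let τ be a non-terminating renewal process on ℕ₀ with P(τ₁ = n) = L(n) n^{-(1+α)}, α ∈ (0,1), L slowly varying, such that 2τ₁ is distributed as the first return time to zero of a nearest-neighbor Markov chain on ℕ₀ with ±1 increments. If X and Y are two copies of this chain started at the origin at times −2ℓ and 0 respectively and coupled to coalesce upon meeting, then 0 ≤ u(n) − u(n+ℓ) ≤ u(n) P(τ₁ > n) ∑_{k=0}^{ℓ−1} u(k), where u(m) := P(m ∈ τ). -/

import Mathlib

open Filter

/-- A sequence `L : ℕ → (0,∞)` is slowly varying if `L(⌊λ n⌋)/L(n) → 1` as `n → ∞`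
for every `λ > 0`. -/
def SlowlyVarying (L : ℕ → ℝ) : Prop :=
  (∀ n, 0 < L n) ∧
    ∀ lam : ℝ, 0 < lam →
      Tendsto (fun n : ℕ => L ⌊lam * n⌋₊ / L n) atTop (nhds 1)

/-- One-step transition weight of a nearest-neighbor Markov chain on `ℕ₀` with up-probability
`p i` at state `i` (and down-probability `1 - p i`). -/
def stepWeight (p : ℕ → ℝ) (a b : ℕ) : ℝ :=
  if b = a + 1 then p a else if a = b + 1 then 1 - p a else 0

/-- Probability weight of a path `γ` of length `m` of the nearest-neighbor chain. -/
noncomputable def pathWeight (p : ℕ → ℝ) (m : ℕ) (γ : Fin (m + 1) → ℕ) : ℝ :=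
  ∏ i : Fin m, stepWeight p (γ i.castSucc) (γ i.succ)

open scoped Classical in
/-- Probability that the nearest-neighbor chain started at `0` returns to `0` for the first
time at time `m`. -/
noncomputable def firstReturnProb (p : ℕ → ℝ) (m : ℕ) : ℝ :=
  ∑ γ : Fin (m + 1) → Fin (m + 2),
    if (γ 0 : ℕ) = 0 ∧ (γ (Fin.last m) : ℕ) = 0 ∧
        (∀ i : Fin (m + 1), i ≠ 0 → i ≠ Fin.last m → (γ i : ℕ) ≠ 0)
      then pathWeight p m (fun i => (γ i : ℕ)) else 0

section Chain
variable (p : ℕ → ℝ)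

noncomputable def Ach : ℕ → ℕ → ℝ
  | 0, 0 => 1
  | 0, _+1 => 0
  | m+1, 0 => Ach m 1 * (1 - p 1)
  | m+1, x+1 => Ach m x * p x + Ach m (x+2) * (1 - p (x+2))

noncomputable def Bch : ℕ → ℕ → ℝ
  | 0, 0 => 1
  | 0, _+1 => 0
  | m+1, 0 => p 0 * Bch m 1
  | m+1, x+1 => (1 - p (x+1)) * Bch m x + p (x+1) * Bch m (x+2)

noncomputable def Dch : ℕ → ℕ → ℝ
  | 0, 0 => 1
  | 0, _+1 => 0
  | _+1, 0 => 0
  | m+1, x+1 => Dch m x * p x + Dch m (x+2) * (1 - p (x+2))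

noncomputable def Ech : ℕ → ℝ
  | 0 => 0
  | m+1 => Dch p m 1 * (1 - p 1)

noncomputable def Cup (x : ℕ) : ℝ := ∏ i ∈ Finset.range x, p i
noncomputable def Cdown (x : ℕ) : ℝ := ∏ i ∈ Finset.range x, (1 - p (i+1))


theorem Ach_nonneg (hp : ∀ i, 0 ≤ p i ∧ p i ≤ 1) : ∀ m x, 0 ≤ Ach p m x := by
  intro m
  induction m with
  | zero => intro x; cases x <;> simp [Ach]
  | succ m ih =>
    intro x
    cases x with
    | zero =>
      simp only [Ach]
      exact mul_nonneg (ih 1) (by linarith [(hp 1).2])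
    | succ y =>
      simp only [Ach]
      exact add_nonneg (mul_nonneg (ih y) (hp y).1)
        (mul_nonneg (ih (y+2)) (by linarith [(hp (y+2)).2]))

theorem Bch_nonneg (hp : ∀ i, 0 ≤ p i ∧ p i ≤ 1) : ∀ m x, 0 ≤ Bch p m x := by
  intro m
  induction m with
  | zero => intro x; cases x <;> simp [Bch]
  | succ m ih =>
    intro x
    cases x with
    | zero =>
      simp only [Bch]
      exact mul_nonneg (hp 0).1 (ih 1)
    | succ y =>
      simp only [Bch]
      exact add_nonneg (mul_nonneg (by linarith [(hp (y+1)).2]) (ih y))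
        (mul_nonneg (hp (y+1)).1 (ih (y+2)))

theorem Dch_nonneg (hp : ∀ i, 0 ≤ p i ∧ p i ≤ 1) : ∀ m x, 0 ≤ Dch p m x := by
  intro m
  induction m with
  | zero => intro x; cases x <;> simp [Dch]
  | succ m ih =>
    intro x
    cases x with
    | zero => simp [Dch]
    | succ y =>
      simp only [Dch]
      exact add_nonneg (mul_nonneg (ih y) (hp y).1)
        (mul_nonneg (ih (y+2)) (by linarith [(hp (y+2)).2]))

theorem Ech_nonneg (hp : ∀ i, 0 ≤ p i ∧ p i ≤ 1) : ∀ m, 0 ≤ Ech p m := by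
  intro m
  cases m with
  | zero => simp [Ech]
  | succ m =>
    simp only [Ech]
    exact mul_nonneg (Dch_nonneg p hp m 1) (by linarith [(hp 1).2])

theorem Ach_eq_zero_of_lt : ∀ m x, m < x → Ach p m x = 0 := by
  intro m
  induction m with
  | zero => intro x hx; cases x with | zero => omega | succ y => simp [Ach]
  | succ m ih =>
    intro x hx
    cases x with
    | zero => omega
    | succ y =>
      simp only [Ach]
      rw [ih y (by omega), ih (y+2) (by omega)]
      ring

theorem Dch_eq_zero_of_lt : ∀ m x, m < x → Dch p m x = 0 := by
  intro m
  induction m with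
  | zero => intro x hx; cases x with | zero => omega | succ y => simp [Dch]
  | succ m ih =>
    intro x hx
    cases x with
    | zero => omega
    | succ y =>
      simp only [Dch]
      rw [ih y (by omega), ih (y+2) (by omega)]
      ring

theorem Ach_parity : ∀ m x, (m + x) % 2 = 1 → Ach p m x = 0 := by
  intro m
  induction m with
  | zero =>
    intro x hx
    cases x with
    | zero => omega
    | succ y => simp [Ach]
  | succ m ih =>
    intro x hx
    cases x with
    | zero =>
      simp only [Ach]
      rw [ih 1 (by omega)]; ring
    | succ y =>
      simp only [Ach]
      rw [ih y (by omega), ih (y+2) (by omega)]; ring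

theorem reversal : ∀ m x, Bch p m x * Cup p x = Ach p m x * Cdown p x := by
  intro m
  induction m with
  | zero =>
    intro x
    cases x with
    | zero => simp [Bch, Ach, Cup, Cdown]
    | succ y => simp [Bch, Ach]
  | succ m ih =>
    intro x
    cases x with
    | zero =>
      have h := ih 1
      simp only [Cup, Cdown, Finset.prod_range_one, Finset.prod_range_zero, zero_add] at h ⊢
      simp only [Bch, Ach]
      linear_combination h
    | succ y =>
      have h1 := ih y
      have h2 := ih (y+2)
      have hCup1 : Cup p (y+1) = Cup p y * p y := Finset.prod_range_succ _ _
      have hCup2 : Cup p (y+2) = Cup p y * p y * p (y+1) := by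
        rw [Cup, Finset.prod_range_succ, Finset.prod_range_succ]; rfl
      have hCd1 : Cdown p (y+1) = Cdown p y * (1 - p (y+1)) := Finset.prod_range_succ _ _
      have hCd2 : Cdown p (y+2) = Cdown p y * (1 - p (y+1)) * (1 - p (y+2)) := by
        rw [Cdown, Finset.prod_range_succ, Finset.prod_range_succ]; rfl
      simp only [Bch, Ach]
      rw [hCup1, hCd1]
      rw [hCup2, hCd2] at h2
      linear_combination ((1 - p (y+1)) * p y) * h1 + h2

theorem Ach_Cup_zero : ∀ m x, Cup p x = 0 → Ach p m x = 0 := by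
  intro m
  induction m with
  | zero =>
    intro x hx
    cases x with
    | zero => simp [Cup] at hx
    | succ y => simp [Ach]
  | succ m ih =>
    intro x hx
    cases x with
    | zero => simp [Cup] at hx
    | succ y =>
      have hy2 : Cup p (y+2) = 0 := by
        rw [Cup, Finset.prod_range_succ]
        rw [show Cup p (y+1) = ∏ i ∈ Finset.range (y+1), p i from rfl] at hx
        rw [hx, zero_mul]
      rw [Cup, Finset.prod_range_succ] at hx
      simp only [Ach]
      rcases mul_eq_zero.1 hx with h | h
      · rw [ih y h, ih (y+2) hy2]; ring
      · rw [h, ih (y+2) hy2]; ring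

theorem cross (m y : ℕ) :
    Ach p m y * Bch p m (y+2) * (p y * p (y+1)) =
    Ach p m (y+2) * Bch p m y * ((1 - p (y+1)) * (1 - p (y+2))) := by
  have hCup2 : Cup p (y+2) = Cup p y * (p y * p (y+1)) := by
    rw [Cup, Finset.prod_range_succ, Finset.prod_range_succ]
    rw [show (∏ i ∈ Finset.range y, p i) = Cup p y from rfl]; ring
  have hCd2 : Cdown p (y+2) = Cdown p y * ((1 - p (y+1)) * (1 - p (y+2))) := by
    rw [Cdown, Finset.prod_range_succ, Finset.prod_range_succ]
    rw [show (∏ i ∈ Finset.range y, (1 - p (i+1))) = Cdown p y from rfl]; ring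
  by_cases hC : Cup p (y+2) = 0
  · rw [Ach_Cup_zero p m (y+2) hC]
    rw [hCup2] at hC
    rcases mul_eq_zero.1 hC with h | h
    · rw [Ach_Cup_zero p m y h]; ring
    · rw [h]; ring
  · have hCy : Cup p y ≠ 0 := by
      intro h; exact hC (by rw [hCup2, h, zero_mul])
    apply mul_right_cancel₀ (mul_ne_zero hCy hC)
    have r1 := reversal p m y
    have r2 := reversal p m (y+2)
    rw [hCup2, hCd2] at r2
    rw [hCup2]
    linear_combination (Ach p m y * Cup p y * (p y * p (y+1))) * r2 -
      (Ach p m (y+2) * ((1 - p (y+1)) * (1 - p (y+2))) * Cup p y * (p y * p (y+1))) * r1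

theorem crossAMGM (hp : ∀ i, 0 ≤ p i ∧ p i ≤ 1) (m y : ℕ) :
    Ach p (m+1) (y+1) * Bch p (m+1) (y+1) ≤
    Ach p m y * Bch p m y * p y + Ach p m (y+2) * Bch p m (y+2) * (1 - p (y+2)) := by
  have hX := cross p m y
  have hann : 0 ≤ Ach p m y := Ach_nonneg p hp m y
  have hann' : 0 ≤ Ach p m (y+2) := Ach_nonneg p hp m (y+2)
  have hbnn : 0 ≤ Bch p m y := Bch_nonneg p hp m y
  have hbnn' : 0 ≤ Bch p m (y+2) := Bch_nonneg p hp m (y+2)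
  have hpy := hp y
  have hpy1 := hp (y+1)
  have hpy2 := hp (y+2)
  simp only [Ach, Bch]
  set a := Ach p m y
  set a' := Ach p m (y+2)
  set b := Bch p m y
  set b' := Bch p m (y+2)
  set q := p (y+1)
  set py := p y
  set d2 := p (y+2)
  -- goal : (a * py + a' * (1 - d2)) * ((1 - q) * b + q * b') ≤ a * b * py + a' * b' * (1 - d2)
  set P := a * b' * (py * q) with hP
  set R := a * b * (py * q) with hR
  set S := a' * b' * ((1 - d2) * (1 - q)) with hS
  have hPnn : 0 ≤ P := by
    apply mul_nonneg (mul_nonneg hann hbnn') (mul_nonneg hpy.1 hpy1.1)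
  have hRnn : 0 ≤ R := mul_nonneg (mul_nonneg hann hbnn) (mul_nonneg hpy.1 hpy1.1)
  have hSnn : 0 ≤ S := mul_nonneg (mul_nonneg hann' hbnn')
    (mul_nonneg (by linarith [hpy2.2]) (by linarith [hpy1.2]))
  have hPRS : P * P = R * S := by
    have h2 : P * P = P * (a' * b * ((1 - q) * (1 - d2))) := by rw [← hX]
    rw [h2, hP, hR, hS]; ring
  have key : 2 * P ≤ R + S := by
    nlinarith [sq_nonneg (R - S), add_nonneg (add_nonneg hRnn hSnn) (by linarith : (0:ℝ) ≤ 2 * P)]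
  nlinarith [hX, key]

theorem exch (m k t : ℕ) :
    ∑ x ∈ Finset.range (m+2+t), Ach p (m+1) x * Bch p k x =
    ∑ x ∈ Finset.range (m+2+t), Ach p m x * Bch p (k+1) x := by
  have hL : ∑ x ∈ Finset.range (m+2+t), Ach p (m+1) x * Bch p k x
      = (∑ y ∈ Finset.range (m+1+t), Ach p (m+1) (y+1) * Bch p k (y+1))
        + Ach p (m+1) 0 * Bch p k 0 := by
    rw [show m+2+t = (m+1+t)+1 by omega, Finset.sum_range_succ']
  have hR : ∑ x ∈ Finset.range (m+2+t), Ach p m x * Bch p (k+1) x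
      = (∑ y ∈ Finset.range (m+1+t), Ach p m (y+1) * Bch p (k+1) (y+1))
        + Ach p m 0 * Bch p (k+1) 0 := by
    rw [show m+2+t = (m+1+t)+1 by omega, Finset.sum_range_succ']
  rw [hL, hR]
  simp only [Ach, Bch]
  have e1 : ∀ y, (Ach p m y * p y + Ach p m (y+2) * (1 - p (y+2))) * Bch p k (y+1)
      = Ach p m y * p y * Bch p k (y+1) + Ach p m (y+2) * (1 - p (y+2)) * Bch p k (y+1) := by
    intro y; ring
  have e2 : ∀ y, Ach p m (y+1) * ((1 - p (y+1)) * Bch p k y + p (y+1) * Bch p k (y+2))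
      = Ach p m (y+1) * (1 - p (y+1)) * Bch p k y + Ach p m (y+1) * p (y+1) * Bch p k (y+2) := by
    intro y; ring
  simp only [e1, e2, Finset.sum_add_distrib]
  -- S1 = sum of A m y * p y * B k (y+1)
  have hS1 : ∑ y ∈ Finset.range (m+1+t), Ach p m y * p y * Bch p k (y+1)
      = (∑ y ∈ Finset.range (m+t), Ach p m (y+1) * p (y+1) * Bch p k (y+2))
        + Ach p m 0 * p 0 * Bch p k 1 := by
    rw [show m+1+t = (m+t)+1 by omega, Finset.sum_range_succ']
  have hS4 : ∑ y ∈ Finset.range (m+1+t), Ach p m (y+1) * p (y+1) * Bch p k (y+2)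
      = (∑ y ∈ Finset.range (m+t), Ach p m (y+1) * p (y+1) * Bch p k (y+2)) + 0 := by
    rw [show m+1+t = (m+t)+1 by omega, Finset.sum_range_succ,
      Ach_eq_zero_of_lt p m (m+t+1) (by omega)]
    ring
  have hS3 : ∑ y ∈ Finset.range (m+1+t), Ach p m (y+1) * (1 - p (y+1)) * Bch p k y
      = (∑ y ∈ Finset.range (m+t), Ach p m (y+2) * (1 - p (y+2)) * Bch p k (y+1))
        + Ach p m 1 * (1 - p 1) * Bch p k 0 := by
    rw [show m+1+t = (m+t)+1 by omega, Finset.sum_range_succ']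
  have hS2 : ∑ y ∈ Finset.range (m+1+t), Ach p m (y+2) * (1 - p (y+2)) * Bch p k (y+1)
      = (∑ y ∈ Finset.range (m+t), Ach p m (y+2) * (1 - p (y+2)) * Bch p k (y+1)) + 0 := by
    rw [show m+1+t = (m+t)+1 by omega, Finset.sum_range_succ,
      Ach_eq_zero_of_lt p m (m+t+2) (by omega)]
    ring
  rw [hS1, hS4, hS3, hS2]
  ring

theorem mid : ∀ k m t : ℕ, Ach p (m+k) 0 = ∑ x ∈ Finset.range (m+2+t), Ach p m x * Bch p k x := by
  intro k
  induction k with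
  | zero =>
    intro m t
    rw [Finset.sum_eq_single 0]
    · simp [Bch]
    · intro b _ hb
      match b, hb with
      | y+1, _ => simp [Bch]
    · intro h
      simp at h
  | succ k ih =>
    intro m t
    have h1 : m + (k+1) = (m+1) + k := by omega
    rw [h1, ih (m+1) t]
    have e := exch p m k (t+1)
    rw [show m+2+(t+1) = m+1+2+t by omega] at e
    rw [e, show m+1+2+t = (m+2+t)+1 by omega, Finset.sum_range_succ,
      Ach_eq_zero_of_lt p m (m+2+t) (by omega)]
    ring

theorem stepineq (hp : ∀ i, 0 ≤ p i ∧ p i ≤ 1) (hp0 : p 0 = 1) (m t : ℕ) :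
    ∑ x ∈ Finset.range (m+2+t), Ach p (m+1) x * Bch p (m+1) x ≤
    ∑ x ∈ Finset.range (m+2+t), Ach p m x * Bch p m x := by
  have hL : ∑ x ∈ Finset.range (m+2+t), Ach p (m+1) x * Bch p (m+1) x
      = (∑ y ∈ Finset.range (m+1+t), Ach p (m+1) (y+1) * Bch p (m+1) (y+1))
        + Ach p (m+1) 0 * Bch p (m+1) 0 := by
    rw [show m+2+t = (m+1+t)+1 by omega, Finset.sum_range_succ']
  rw [hL]
  have hhead : Ach p (m+1) 0 * Bch p (m+1) 0 = Ach p m 1 * Bch p m 1 * (1 - p 1) := by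
    simp only [Ach, Bch, hp0]; ring
  have hsum : (∑ y ∈ Finset.range (m+1+t), Ach p (m+1) (y+1) * Bch p (m+1) (y+1))
      ≤ ∑ y ∈ Finset.range (m+1+t),
          (Ach p m y * Bch p m y * p y + Ach p m (y+2) * Bch p m (y+2) * (1 - p (y+2))) :=
    Finset.sum_le_sum (fun y _ => crossAMGM p hp m y)
  have hsplit : ∑ y ∈ Finset.range (m+1+t),
      (Ach p m y * Bch p m y * p y + Ach p m (y+2) * Bch p m (y+2) * (1 - p (y+2)))
      = (∑ y ∈ Finset.range (m+1+t), Ach p m y * Bch p m y * p y)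
        + ∑ y ∈ Finset.range (m+1+t), Ach p m (y+2) * Bch p m (y+2) * (1 - p (y+2)) :=
    Finset.sum_add_distrib
  have hA : (∑ y ∈ Finset.range (m+1+t), Ach p m y * Bch p m y * p y)
      ≤ ∑ y ∈ Finset.range (m+2+t), Ach p m y * Bch p m y * p y := by
    rw [show m+2+t = (m+1+t)+1 by omega, Finset.sum_range_succ]
    have : 0 ≤ Ach p m (m+1+t) * Bch p m (m+1+t) * p (m+1+t) :=
      mul_nonneg (mul_nonneg (Ach_nonneg p hp m _) (Bch_nonneg p hp m _)) (hp _).1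
    linarith
  have hB : (∑ y ∈ Finset.range (m+1+t), Ach p m (y+2) * Bch p m (y+2) * (1 - p (y+2)))
        + Ach p m 1 * Bch p m 1 * (1 - p 1)
      = ∑ y ∈ Finset.range (m+2+t), Ach p m y * Bch p m y * (1 - p y) := by
    have h1 : ∑ y ∈ Finset.range (m+1+t), Ach p m (y+2) * Bch p m (y+2) * (1 - p (y+2))
        = (∑ y ∈ Finset.range (m+t), Ach p m (y+2) * Bch p m (y+2) * (1 - p (y+2))) + 0 := by
      rw [show m+1+t = (m+t)+1 by omega, Finset.sum_range_succ,
        Ach_eq_zero_of_lt p m (m+t+2) (by omega)]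
      ring
    have h2 : ∑ y ∈ Finset.range (m+2+t), Ach p m y * Bch p m y * (1 - p y)
        = (∑ y ∈ Finset.range (m+1+t), Ach p m (y+1) * Bch p m (y+1) * (1 - p (y+1)))
          + Ach p m 0 * Bch p m 0 * (1 - p 0) := by
      rw [show m+2+t = (m+1+t)+1 by omega, Finset.sum_range_succ']
    have h3 : ∑ y ∈ Finset.range (m+1+t), Ach p m (y+1) * Bch p m (y+1) * (1 - p (y+1))
        = (∑ y ∈ Finset.range (m+t), Ach p m (y+2) * Bch p m (y+2) * (1 - p (y+2)))
          + Ach p m 1 * Bch p m 1 * (1 - p 1) := by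
      rw [show m+1+t = (m+t)+1 by omega, Finset.sum_range_succ']
    rw [h1, h2, h3, hp0]
    ring
  have hfin : (∑ y ∈ Finset.range (m+2+t), Ach p m y * Bch p m y * p y)
      + ∑ y ∈ Finset.range (m+2+t), Ach p m y * Bch p m y * (1 - p y)
      = ∑ x ∈ Finset.range (m+2+t), Ach p m x * Bch p m x := by
    rw [← Finset.sum_add_distrib]
    apply Finset.sum_congr rfl
    intro x _
    ring
  linarith

theorem Ach_mono (hp : ∀ i, 0 ≤ p i ∧ p i ≤ 1) (hp0 : p 0 = 1) (n : ℕ) :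
    Ach p (2*(n+1)) 0 ≤ Ach p (2*n) 0 := by
  have h1 : Ach p (2*(n+1)) 0 = ∑ x ∈ Finset.range ((n+1)+2+n), Ach p (n+1) x * Bch p (n+1) x := by
    rw [show 2*(n+1) = (n+1)+(n+1) by ring]
    exact mid p (n+1) (n+1) n
  have h2 : Ach p (2*n) 0 = ∑ x ∈ Finset.range (n+2+(n+1)), Ach p n x * Bch p n x := by
    rw [show 2*n = n+n by ring]
    exact mid p n n (n+1)
  rw [h1, h2, show (n+1)+2+n = n+2+(n+1) by omega]
  exact stepineq p hp hp0 n (n+1)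

theorem AD : ∀ m x : ℕ, Ach p m x = ∑ k ∈ Finset.range (m+1), Ach p k 0 * Dch p (m-k) x := by
  intro m
  induction m with
  | zero =>
    intro x
    cases x <;> simp [Ach, Dch]
  | succ m ih =>
    intro x
    rw [Finset.sum_range_succ, Nat.sub_self]
    cases x with
    | zero =>
      have hz : ∑ k ∈ Finset.range (m+1), Ach p k 0 * Dch p (m+1-k) 0 = 0 := by
        apply Finset.sum_eq_zero
        intro k hk
        simp only [Finset.mem_range] at hk
        rw [show m+1-k = (m-k)+1 by omega]
        simp [Dch]
      rw [hz, zero_add]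
      simp [Dch]
    | succ y =>
      have hstep : ∀ k ∈ Finset.range (m+1),
          Ach p k 0 * Dch p (m+1-k) (y+1)
          = Ach p k 0 * Dch p (m-k) y * p y + Ach p k 0 * Dch p (m-k) (y+2) * (1 - p (y+2)) := by
        intro k hk
        simp only [Finset.mem_range] at hk
        rw [show m+1-k = (m-k)+1 by omega]
        simp only [Dch]
        ring
      rw [Finset.sum_congr rfl hstep, Finset.sum_add_distrib]
      simp only [Ach]
      rw [ih y, ih (y+2), Finset.sum_mul, Finset.sum_mul]
      simp [Dch]

theorem Arenewal (M : ℕ) :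
    Ach p (M+1) 0 = ∑ k ∈ Finset.range (M+1), Ach p k 0 * Ech p (M+1-k) := by
  have h0 : Ach p (M+1) 0 = Ach p M 1 * (1 - p 1) := rfl
  rw [h0, AD p M 1, Finset.sum_mul]
  apply Finset.sum_congr rfl
  intro k hk
  simp only [Finset.mem_range] at hk
  rw [show M+1-k = (M-k)+1 by omega]
  simp only [Ech]
  ring

theorem sum_range_two_mul (f : ℕ → ℝ) : ∀ t : ℕ,
    ∑ k ∈ Finset.range (2*t), f k = ∑ m ∈ Finset.range t, (f (2*m) + f (2*m+1)) := by
  intro t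
  induction t with
  | zero => simp
  | succ t ih =>
    rw [show 2*(t+1) = (2*t+1)+1 by ring, Finset.sum_range_succ, Finset.sum_range_succ,
      Finset.sum_range_succ, ih]
    ring

end Chain
section PathSum
variable (p : ℕ → ℝ)

theorem pathWeight_snoc (m : ℕ) (f : Fin (m+1) → ℕ) (c : ℕ) :
    pathWeight p (m+1) (Fin.snoc f c) = pathWeight p m f * stepWeight p (f (Fin.last m)) c := by
  unfold pathWeight
  rw [Fin.prod_univ_castSucc]
  congr 1
  · apply Finset.prod_congr rfl
    intro i _
    rw [Fin.succ_castSucc, Fin.snoc_castSucc, Fin.snoc_castSucc]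
  · rw [Fin.succ_last, Fin.snoc_last, Fin.snoc_castSucc]

theorem sum_snoc (N m : ℕ) (G : (Fin (m+2) → Fin N) → ℝ) :
    ∑ γ : Fin (m+2) → Fin N, G γ
      = ∑ b : Fin N, ∑ γ' : Fin (m+1) → Fin N, G (Fin.snoc γ' b) := by
  rw [← Equiv.sum_comp (Fin.snocEquiv (fun _ => Fin N)) G, Fintype.sum_prod_type]
  rfl

theorem comp_val_snoc (N m : ℕ) (γ' : Fin (m+1) → Fin N) (b : Fin N) :
    (fun i => ((Fin.snoc γ' b : Fin (m+2) → Fin N) i : ℕ))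
      = Fin.snoc (fun i => ((γ' i : ℕ))) (b : ℕ) := by
  funext i
  refine Fin.lastCases ?_ ?_ i
  · rw [Fin.snoc_last, Fin.snoc_last]
  · intro j
    rw [Fin.snoc_castSucc, Fin.snoc_castSucc]

theorem snoc_eval_zero (N m : ℕ) (γ' : Fin (m+1) → Fin N) (b : Fin N) :
    (Fin.snoc γ' b : Fin (m+2) → Fin N) 0 = γ' 0 := by
  have h : (0 : Fin (m+2)) = Fin.castSucc (0 : Fin (m+1)) := by simp
  rw [h, Fin.snoc_castSucc]

open scoped Classical in
noncomputable def Wsum (N m x : ℕ) : ℝ :=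
  ∑ γ : Fin (m+1) → Fin N,
    if (γ 0 : ℕ) = 0 ∧ (γ (Fin.last m) : ℕ) = x ∧ (∀ i, i ≠ 0 → (γ i : ℕ) ≠ 0)
    then pathWeight p m (fun i => (γ i : ℕ)) else 0

theorem cond_snoc (N m x : ℕ) (b : Fin N) (γ' : Fin (m+1) → Fin N) :
    (((Fin.snoc γ' b : Fin (m+2) → Fin N) 0 : ℕ) = 0 ∧
      ((Fin.snoc γ' b : Fin (m+2) → Fin N) (Fin.last (m+1)) : ℕ) = x ∧
      (∀ i, i ≠ 0 → (((Fin.snoc γ' b : Fin (m+2) → Fin N) i : ℕ) ≠ 0)))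
    ↔ ((b : ℕ) = x ∧ ((γ' 0 : ℕ) = 0 ∧ (b : ℕ) ≠ 0 ∧ (∀ i, i ≠ 0 → (γ' i : ℕ) ≠ 0))) := by
  rw [snoc_eval_zero, Fin.snoc_last]
  constructor
  · rintro ⟨h1, h2, h3⟩
    refine ⟨h2, h1, ?_, ?_⟩
    · have hl := h3 (Fin.last (m+1)) (by simp [Fin.ext_iff])
      rwa [Fin.snoc_last] at hl
    · intro i hi
      have hcs : Fin.castSucc i ≠ 0 := by
        simp only [ne_eq, Fin.ext_iff, Fin.coe_castSucc, Fin.val_zero] at hi ⊢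
        exact hi
      have := h3 (Fin.castSucc i) hcs
      rwa [Fin.snoc_castSucc] at this
  · rintro ⟨h1, h2, h3, h4⟩
    refine ⟨h2, h1, ?_⟩
    intro i
    refine Fin.lastCases ?_ (fun j => ?_) i
    · intro _; rw [Fin.snoc_last]; exact h3
    · intro hj
      rw [Fin.snoc_castSucc]
      apply h4
      simp only [ne_eq, Fin.ext_iff, Fin.coe_castSucc, Fin.val_zero] at hj ⊢
      exact hj

theorem sum_Dch_step (m N x : ℕ) (hN : m + 2 ≤ N) (hx : x + 1 < N + 1) :
    ∑ j ∈ Finset.range N, Dch p m j * stepWeight p j (x+1)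
      = Dch p m x * p x + Dch p m (x+2) * (1 - p (x+2)) := by
  have hfun : ∀ j, Dch p m j * stepWeight p j (x+1)
      = (if j = x then Dch p m x * p x else 0)
        + (if j = x+2 then Dch p m (x+2) * (1 - p (x+2)) else 0) := by
    intro j
    unfold stepWeight
    by_cases hj : j = x
    · subst hj
      rw [if_pos rfl, if_pos rfl, if_neg (by omega)]
      ring
    · by_cases hj2 : j = x + 2
      · subst hj2
        rw [if_neg (by omega), if_pos (by omega), if_neg hj, if_pos rfl]
        ring
      · rw [if_neg (by omega), if_neg (by omega), if_neg hj, if_neg hj2]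
        ring
  rw [Finset.sum_congr rfl (fun j _ => hfun j), Finset.sum_add_distrib,
    Finset.sum_ite_eq' (Finset.range N) x, Finset.sum_ite_eq' (Finset.range N) (x+2)]
  rw [if_pos (Finset.mem_range.2 (by omega))]
  by_cases h2 : x + 2 < N
  · rw [if_pos (Finset.mem_range.2 h2)]
  · rw [if_neg (by simp [Finset.mem_range]; omega), Dch_eq_zero_of_lt p m (x+2) (by omega)]
    ring

theorem Wsum_eq_Dch : ∀ (m N x : ℕ), m + 2 ≤ N → Wsum p N m x = Dch p m x := by
  intro m
  induction m with
  | zero =>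
    intro N x hN
    haveI : NeZero N := ⟨by omega⟩
    rw [Wsum, ← Equiv.sum_comp (Equiv.funUnique (Fin 1) (Fin N)).symm]
    have hterm : ∀ a : Fin N,
        (if ((((Equiv.funUnique (Fin 1) (Fin N)).symm a) 0 : ℕ) = 0 ∧
            ((((Equiv.funUnique (Fin 1) (Fin N)).symm a) (Fin.last 0)) : ℕ) = x ∧
            (∀ i, i ≠ 0 → ((((Equiv.funUnique (Fin 1) (Fin N)).symm a) i : ℕ) ≠ 0)))
          then pathWeight p 0 (fun i => ((((Equiv.funUnique (Fin 1) (Fin N)).symm a) i : ℕ)))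
          else 0)
        = if (a = 0 ∧ x = 0) then 1 else 0 := by
      intro a
      have hpw : pathWeight p 0 (fun i => ((((Equiv.funUnique (Fin 1) (Fin N)).symm a) i : ℕ))) = 1 := by
        unfold pathWeight
        simp
      rw [hpw]
      apply if_congr _ rfl rfl
      constructor
      · rintro ⟨h1, h2, -⟩
        have ha : a = 0 := by
          apply Fin.ext
          simpa using h1
        refine ⟨ha, ?_⟩
        rw [← h2]
        simp [ha]
      · rintro ⟨h1, h2⟩
        subst h1; subst h2
        refine ⟨by simp, by simp, ?_⟩
        intro i hi
        exact absurd (Subsingleton.elim i 0) hi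
    rw [Finset.sum_congr rfl (fun a _ => hterm a)]
    by_cases hx : x = 0
    · subst hx
      simp only [and_true]
      rw [Finset.sum_ite_eq' Finset.univ (0 : Fin N) (fun _ => (1:ℝ))]
      simp [Dch]
    · simp only [hx, and_false, if_false, Finset.sum_const_zero]
      cases x with
      | zero => omega
      | succ y => simp [Dch]
  | succ m ih =>
    intro N x hN
    haveI : NeZero N := ⟨by omega⟩
    rw [Wsum, sum_snoc]
    have hterm : ∀ (b : Fin N) (γ' : Fin (m+1) → Fin N),
        (if (((Fin.snoc γ' b : Fin (m+2) → Fin N) 0 : ℕ) = 0 ∧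
            ((Fin.snoc γ' b : Fin (m+2) → Fin N) (Fin.last (m+1)) : ℕ) = x ∧
            (∀ i, i ≠ 0 → (((Fin.snoc γ' b : Fin (m+2) → Fin N) i : ℕ) ≠ 0)))
          then pathWeight p (m+1) (fun i => (((Fin.snoc γ' b : Fin (m+2) → Fin N) i : ℕ)))
          else 0)
        = if ((b : ℕ) = x ∧ ((γ' 0 : ℕ) = 0 ∧ (b:ℕ) ≠ 0 ∧ (∀ i, i ≠ 0 → ((γ' i : ℕ) ≠ 0))))
          then pathWeight p m (fun i => (γ' i : ℕ)) * stepWeight p (γ' (Fin.last m) : ℕ) (b : ℕ)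
          else 0 := by
      intro b γ'
      have hpw : pathWeight p (m+1) (fun i => (((Fin.snoc γ' b : Fin (m+2) → Fin N) i : ℕ)))
          = pathWeight p m (fun i => (γ' i : ℕ)) * stepWeight p (γ' (Fin.last m) : ℕ) (b : ℕ) := by
        rw [comp_val_snoc, pathWeight_snoc]
      rw [hpw]
      exact if_congr (cond_snoc N m x b γ') rfl rfl
    rw [Finset.sum_congr rfl (fun b _ => Finset.sum_congr rfl (fun γ' _ => hterm b γ'))]
    rcases Nat.lt_or_ge x N with hxN | hxN
    · cases x with
      | zero =>
        rw [Finset.sum_eq_zero, Dch]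
        intro b _
        apply Finset.sum_eq_zero
        intro γ' _
        apply if_neg
        rintro ⟨h1, -, h3, -⟩
        exact h3 h1
      | succ w =>
        rw [Finset.sum_eq_single (⟨w+1, hxN⟩ : Fin N)]
        rotate_left
        · intro b _ hb
          apply Finset.sum_eq_zero
          intro γ' _
          apply if_neg
          rintro ⟨h1, -⟩
          exact hb (Fin.ext h1)
        · intro h
          exact absurd (Finset.mem_univ _) h
        have hcollapse : ∀ γ' : Fin (m+1) → Fin N,
            (if (((⟨w+1, hxN⟩ : Fin N) : ℕ) = w+1 ∧ ((γ' 0 : ℕ) = 0 ∧ ((⟨w+1, hxN⟩ : Fin N):ℕ) ≠ 0 ∧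
                (∀ i, i ≠ 0 → ((γ' i : ℕ) ≠ 0))))
              then pathWeight p m (fun i => (γ' i : ℕ)) * stepWeight p (γ' (Fin.last m) : ℕ) (w+1)
              else 0)
            = ∑ y : Fin N, (if ((γ' 0 : ℕ) = 0 ∧ (γ' (Fin.last m) : ℕ) = (y : ℕ) ∧
                (∀ i, i ≠ 0 → ((γ' i : ℕ) ≠ 0)))
              then pathWeight p m (fun i => (γ' i : ℕ)) * stepWeight p (y : ℕ) (w+1)
              else 0) := by
          intro γ'
          rw [Finset.sum_eq_single (γ' (Fin.last m))]
          rotate_left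
          · intro y _ hy
            apply if_neg
            rintro ⟨-, h2, -⟩
            exact hy (Fin.ext h2.symm)
          · intro h
            exact absurd (Finset.mem_univ _) h
          apply if_congr _ rfl rfl
          constructor
          · rintro ⟨-, h⟩
            exact ⟨h.1, rfl, h.2.2⟩
          · rintro ⟨h1, -, h3⟩
            exact ⟨rfl, h1, by simp, h3⟩
        rw [Finset.sum_congr rfl (fun γ' _ => hcollapse γ'), Finset.sum_comm]
        have hfiber : ∀ y : Fin N,
            (∑ γ' : Fin (m+1) → Fin N, if ((γ' 0 : ℕ) = 0 ∧ (γ' (Fin.last m) : ℕ) = (y : ℕ) ∧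
                (∀ i, i ≠ 0 → ((γ' i : ℕ) ≠ 0)))
              then pathWeight p m (fun i => (γ' i : ℕ)) * stepWeight p (y : ℕ) (w+1)
              else 0)
            = Wsum p N m (y : ℕ) * stepWeight p (y : ℕ) (w+1) := by
          intro y
          rw [Wsum, Finset.sum_mul]
          apply Finset.sum_congr rfl
          intro γ' _
          rw [ite_mul, zero_mul]
        rw [Finset.sum_congr rfl (fun y _ => hfiber y)]
        have hval : ∑ y : Fin N, Wsum p N m (y : ℕ) * stepWeight p (y : ℕ) (w+1)
            = ∑ j ∈ Finset.range N, Wsum p N m j * stepWeight p j (w+1) :=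
          Fin.sum_univ_eq_sum_range (fun j => Wsum p N m j * stepWeight p j (w+1)) N
        rw [hval, Finset.sum_congr rfl (fun j _ => by rw [ih N j (by omega)]),
          sum_Dch_step p m N w (by omega) (by omega)]
        simp [Dch]
    · rw [Finset.sum_eq_zero, Dch_eq_zero_of_lt p (m+1) x (by omega)]
      intro b _
      apply Finset.sum_eq_zero
      intro γ' _
      apply if_neg
      rintro ⟨h1, -⟩
      have := b.isLt
      omega

theorem cond_snoc_fr (N m : ℕ) (b : Fin N) (γ' : Fin (m+1) → Fin N) :
    (((Fin.snoc γ' b : Fin (m+2) → Fin N) 0 : ℕ) = 0 ∧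
      ((Fin.snoc γ' b : Fin (m+2) → Fin N) (Fin.last (m+1)) : ℕ) = 0 ∧
      (∀ i, i ≠ 0 → i ≠ Fin.last (m+1) → (((Fin.snoc γ' b : Fin (m+2) → Fin N) i : ℕ) ≠ 0)))
    ↔ ((b : ℕ) = 0 ∧ ((γ' 0 : ℕ) = 0 ∧ (∀ i, i ≠ 0 → (γ' i : ℕ) ≠ 0))) := by
  rw [snoc_eval_zero, Fin.snoc_last]
  constructor
  · rintro ⟨h1, h2, h3⟩
    refine ⟨h2, h1, ?_⟩
    intro i hi
    have hcs : Fin.castSucc i ≠ 0 := by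
      simp only [ne_eq, Fin.ext_iff, Fin.coe_castSucc, Fin.val_zero] at hi ⊢
      exact hi
    have hcl : Fin.castSucc i ≠ Fin.last (m+1) := by
      have := i.isLt
      simp only [ne_eq, Fin.ext_iff, Fin.coe_castSucc, Fin.val_last]
      omega
    have := h3 (Fin.castSucc i) hcs hcl
    rwa [Fin.snoc_castSucc] at this
  · rintro ⟨h1, h2, h3⟩
    refine ⟨h2, h1, ?_⟩
    intro i
    refine Fin.lastCases ?_ (fun j => ?_) i
    · intro _ hne
      exact absurd rfl hne
    · intro hj _
      rw [Fin.snoc_castSucc]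
      apply h3
      simp only [ne_eq, Fin.ext_iff, Fin.coe_castSucc, Fin.val_zero] at hj ⊢
      exact hj

theorem firstReturn_eq_Ech (m : ℕ) : firstReturnProb p (m+1) = Ech p (m+1) := by
  rw [firstReturnProb, sum_snoc]
  have hterm : ∀ (b : Fin (m+3)) (γ' : Fin (m+1) → Fin (m+3)),
      (if (((Fin.snoc γ' b : Fin (m+2) → Fin (m+3)) 0 : ℕ) = 0 ∧
          ((Fin.snoc γ' b : Fin (m+2) → Fin (m+3)) (Fin.last (m+1)) : ℕ) = 0 ∧
          (∀ i, i ≠ 0 → i ≠ Fin.last (m+1) →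
            (((Fin.snoc γ' b : Fin (m+2) → Fin (m+3)) i : ℕ) ≠ 0)))
        then pathWeight p (m+1) (fun i => (((Fin.snoc γ' b : Fin (m+2) → Fin (m+3)) i : ℕ)))
        else 0)
      = if ((b : ℕ) = 0 ∧ ((γ' 0 : ℕ) = 0 ∧ (∀ i, i ≠ 0 → ((γ' i : ℕ) ≠ 0))))
        then pathWeight p m (fun i => (γ' i : ℕ)) * stepWeight p (γ' (Fin.last m) : ℕ) (b : ℕ)
        else 0 := by
    intro b γ'
    have hpw : pathWeight p (m+1) (fun i => (((Fin.snoc γ' b : Fin (m+2) → Fin (m+3)) i : ℕ)))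
        = pathWeight p m (fun i => (γ' i : ℕ)) * stepWeight p (γ' (Fin.last m) : ℕ) (b : ℕ) := by
      rw [comp_val_snoc, pathWeight_snoc]
    rw [hpw]
    exact if_congr (cond_snoc_fr (m+3) m b γ') rfl rfl
  rw [Finset.sum_congr rfl (fun b _ => Finset.sum_congr rfl (fun γ' _ => hterm b γ'))]
  rw [Finset.sum_eq_single (⟨0, by omega⟩ : Fin (m+3))]
  rotate_left
  · intro b _ hb
    apply Finset.sum_eq_zero
    intro γ' _
    apply if_neg
    rintro ⟨h1, -⟩
    exact hb (Fin.ext h1)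
  · intro h
    exact absurd (Finset.mem_univ _) h
  have hcollapse : ∀ γ' : Fin (m+1) → Fin (m+3),
      (if (((⟨0, by omega⟩ : Fin (m+3)) : ℕ) = 0 ∧ ((γ' 0 : ℕ) = 0 ∧
          (∀ i, i ≠ 0 → ((γ' i : ℕ) ≠ 0))))
        then pathWeight p m (fun i => (γ' i : ℕ)) * stepWeight p (γ' (Fin.last m) : ℕ) 0
        else 0)
      = ∑ y : Fin (m+3), (if ((γ' 0 : ℕ) = 0 ∧ (γ' (Fin.last m) : ℕ) = (y : ℕ) ∧
          (∀ i, i ≠ 0 → ((γ' i : ℕ) ≠ 0)))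
        then pathWeight p m (fun i => (γ' i : ℕ)) * stepWeight p (y : ℕ) 0
        else 0) := by
    intro γ'
    rw [Finset.sum_eq_single (γ' (Fin.last m))]
    rotate_left
    · intro y _ hy
      apply if_neg
      rintro ⟨-, h2, -⟩
      exact hy (Fin.ext h2.symm)
    · intro h
      exact absurd (Finset.mem_univ _) h
    apply if_congr _ rfl rfl
    constructor
    · rintro ⟨-, h⟩
      exact ⟨h.1, rfl, h.2⟩
    · rintro ⟨h1, -, h3⟩
      exact ⟨rfl, h1, h3⟩
  rw [Finset.sum_congr rfl (fun γ' _ => hcollapse γ'), Finset.sum_comm]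
  have hfiber : ∀ y : Fin (m+3),
      (∑ γ' : Fin (m+1) → Fin (m+3), if ((γ' 0 : ℕ) = 0 ∧ (γ' (Fin.last m) : ℕ) = (y : ℕ) ∧
          (∀ i, i ≠ 0 → ((γ' i : ℕ) ≠ 0)))
        then pathWeight p m (fun i => (γ' i : ℕ)) * stepWeight p (y : ℕ) 0
        else 0)
      = Wsum p (m+3) m (y : ℕ) * stepWeight p (y : ℕ) 0 := by
    intro y
    rw [Wsum, Finset.sum_mul]
    apply Finset.sum_congr rfl
    intro γ' _
    rw [ite_mul, zero_mul]
  rw [Finset.sum_congr rfl (fun y _ => hfiber y)]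
  have hval : ∑ y : Fin (m+3), Wsum p (m+3) m (y : ℕ) * stepWeight p (y : ℕ) 0
      = ∑ j ∈ Finset.range (m+3), Wsum p (m+3) m j * stepWeight p j 0 :=
    Fin.sum_univ_eq_sum_range (fun j => Wsum p (m+3) m j * stepWeight p j 0) (m+3)
  rw [hval, Finset.sum_congr rfl (fun j _ => by rw [Wsum_eq_Dch p m (m+3) j (by omega)])]
  have hfun0 : ∀ j, Dch p m j * stepWeight p j 0
      = if j = 1 then Dch p m 1 * (1 - p 1) else 0 := by
    intro j
    unfold stepWeight
    by_cases hj : j = 1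
    · subst hj
      rw [if_neg (by omega), if_pos rfl, if_pos rfl]
    · rw [if_neg (by omega), if_neg (by omega), if_neg hj]
      ring
  rw [Finset.sum_congr rfl (fun j _ => hfun0 j),
    Finset.sum_ite_eq' (Finset.range (m+3)) 1, if_pos (Finset.mem_range.2 (by omega))]
  simp [Ech]

end PathSum

section Renewal
variable (K u : ℕ → ℝ) (p : ℕ → ℝ)

theorem u_eq_Ach (hfirst : ∀ n : ℕ, 1 ≤ n → K n = firstReturnProb p (2 * n))
    (hu0 : u 0 = 1)
    (hren : ∀ n : ℕ, u (n + 1) = ∑ m ∈ Finset.range (n + 1), K (n + 1 - m) * u m) :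
    ∀ n, u n = Ach p (2*n) 0 := by
  intro n
  induction n using Nat.strong_induction_on with
  | _ n ih =>
    cases n with
    | zero => rw [hu0]; simp [Ach]
    | succ n =>
      have hA : Ach p (2*(n+1)) 0
          = ∑ k ∈ Finset.range (2*(n+1)), Ach p k 0 * Ech p (2*(n+1)-k) := by
        rw [show 2*(n+1) = (2*n+1)+1 by ring]
        exact Arenewal p (2*n+1)
      rw [hA, sum_range_two_mul (fun k => Ach p k 0 * Ech p (2*(n+1)-k)) (n+1)]
      have hterm : ∀ m ∈ Finset.range (n+1),
          Ach p (2*m) 0 * Ech p (2*(n+1)-2*m) + Ach p (2*m+1) 0 * Ech p (2*(n+1)-(2*m+1))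
          = K (n+1-m) * u m := by
        intro m hm
        simp only [Finset.mem_range] at hm
        rw [Ach_parity p (2*m+1) 0 (by omega), zero_mul, add_zero]
        rw [← ih m (by omega)]
        have hE : Ech p (2*(n+1)-2*m) = K (n+1-m) := by
          obtain ⟨j, hj⟩ : ∃ j, n+1-m = j+1 := ⟨n-m, by omega⟩
          rw [hfirst (n+1-m) (by omega), hj, show 2*(n+1)-2*m = 2*(j+1) by omega,
            show 2*(j+1) = 2*j+1+1 by ring]
          exact (firstReturn_eq_Ech p (2*j+1)).symm
        rw [hE]
        ring
      rw [Finset.sum_congr rfl hterm]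
      exact hren n

theorem u_anti (hp0 : p 0 = 1) (hp : ∀ i, 0 ≤ p i ∧ p i ≤ 1)
    (hfirst : ∀ n : ℕ, 1 ≤ n → K n = firstReturnProb p (2 * n))
    (hu0 : u 0 = 1)
    (hren : ∀ n : ℕ, u (n + 1) = ∑ m ∈ Finset.range (n + 1), K (n + 1 - m) * u m) :
    Antitone u := by
  apply antitone_nat_of_succ_le
  intro n
  rw [u_eq_Ach K u p hfirst hu0 hren n, u_eq_Ach K u p hfirst hu0 hren (n+1)]
  exact Ach_mono p hp hp0 n

theorem u_nonneg (hKnn : ∀ n, 0 ≤ K n) (hu0 : u 0 = 1)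
    (hren : ∀ n : ℕ, u (n + 1) = ∑ m ∈ Finset.range (n + 1), K (n + 1 - m) * u m) :
    ∀ n, 0 ≤ u n := by
  intro n
  induction n using Nat.strong_induction_on with
  | _ n ih =>
    cases n with
    | zero => rw [hu0]; norm_num
    | succ n =>
      rw [hren n]
      apply Finset.sum_nonneg
      intro m hm
      simp only [Finset.mem_range] at hm
      exact mul_nonneg (hKnn _) (ih m (by omega))

theorem hasSum_tail (hnorm : HasSum K 1) (n : ℕ) :
    HasSum (fun k => if n < k then K k else 0) (1 - ∑ k ∈ Finset.range (n+1), K k) := by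
  have hg : HasSum (fun k => if k < n+1 then K k else 0) (∑ k ∈ Finset.range (n+1), K k) := by
    have h := hasSum_sum_of_ne_finset_zero
      (f := fun k => if k < n+1 then K k else 0) (s := Finset.range (n+1)) (L := SummationFilter.unconditional ℕ)
      (by intro b hb; simp only [Finset.mem_range] at hb; simp [hb])
    have heq : ∑ b ∈ Finset.range (n+1), (if b < n+1 then K b else 0)
        = ∑ k ∈ Finset.range (n+1), K k := by
      apply Finset.sum_congr rfl
      intro b hb
      simp only [Finset.mem_range] at hb
      rw [if_pos hb]
    rwa [heq] at h
  have hsub := hnorm.sub hg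
  have heq2 : (fun k => K k - (if k < n+1 then K k else 0))
      = fun k => if n < k then K k else 0 := by
    funext k
    by_cases hk : k < n+1
    · rw [if_pos hk, if_neg (by omega)]; ring
    · rw [if_neg hk, if_pos (by omega)]; ring
  rwa [heq2] at hsub

theorem tail_nonneg (hnorm : HasSum K 1) (hKnn : ∀ n, 0 ≤ K n) (n : ℕ) :
    0 ≤ 1 - ∑ k ∈ Finset.range (n+1), K k := by
  refine hasSum_le (f := fun _ => (0:ℝ)) ?_ hasSum_zero (hasSum_tail K hnorm n)
  intro k
  by_cases hk : n < k
  · rw [if_pos hk]; exact hKnn k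
  · rw [if_neg hk]

theorem tail_anti (hKnn : ∀ n, 0 ≤ K n) :
    ∀ a b : ℕ, a ≤ b →
      1 - ∑ k ∈ Finset.range (b+1), K k ≤ 1 - ∑ k ∈ Finset.range (a+1), K k := by
  intro a b hab
  have : ∑ k ∈ Finset.range (a+1), K k ≤ ∑ k ∈ Finset.range (b+1), K k := by
    apply Finset.sum_le_sum_of_subset_of_nonneg
    · exact Finset.range_subset_range.2 (by omega)
    · intro i _ _; exact hKnn i
  linarith

theorem one_u_tail (hK0 : K 0 = 0) (hu0 : u 0 = 1)
    (hren : ∀ n : ℕ, u (n + 1) = ∑ m ∈ Finset.range (n + 1), K (n + 1 - m) * u m) :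
    ∀ m : ℕ, ∑ k ∈ Finset.range (m+1), u k * (1 - ∑ j ∈ Finset.range (m-k+1), K j) = 1 := by
  intro m
  induction m with
  | zero => simp [hu0, hK0]
  | succ m ih =>
    rw [Finset.sum_range_succ]
    have hterm : ∀ k ∈ Finset.range (m+1),
        u k * (1 - ∑ j ∈ Finset.range (m+1-k+1), K j)
        = u k * (1 - ∑ j ∈ Finset.range (m-k+1), K j) - K (m+1-k) * u k := by
      intro k hk
      simp only [Finset.mem_range] at hk
      rw [show m+1-k+1 = (m-k+1)+1 by omega, Finset.sum_range_succ,
        show m-k+1 = m+1-k by omega]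
      ring
    rw [Finset.sum_congr rfl hterm, Finset.sum_sub_distrib, ih, ← hren m,
      show m+1-(m+1)+1 = 1 by omega, Finset.sum_range_one, hK0]
    ring

theorem idI (hu0 : u 0 = 1)
    (hren : ∀ n : ℕ, u (n + 1) = ∑ m ∈ Finset.range (n + 1), K (n + 1 - m) * u m) :
    ∀ l : ℕ, 1 ≤ l → ∀ n : ℕ,
      u (n + l) = ∑ s ∈ Finset.range (n+1),
        (∑ k ∈ Finset.range l, u k * K (l + s - k)) * u (n - s) := by
  have base : ∀ n : ℕ, u (n+1) = ∑ s ∈ Finset.range (n+1), K (s+1) * u (n-s) := by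
    intro n
    rw [hren n, ← Finset.sum_range_reflect (fun s => K (s+1) * u (n-s)) (n+1)]
    apply Finset.sum_congr rfl
    intro m hm
    simp only [Finset.mem_range] at hm
    rw [show n+1-1-m = n-m by omega, show n-(n-m) = m by omega, show n-m+1 = n+1-m by omega]
  intro l hl
  induction l with
  | zero => omega
  | succ l ihl =>
    rcases Nat.eq_zero_or_pos l with rfl | hlpos
    · intro n
      simp only [Nat.zero_add]
      rw [base n]
      apply Finset.sum_congr rfl
      intro s hs
      simp only [Finset.sum_range_one, hu0]
      rw [show 1 + s - 0 = s + 1 by omega]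
      ring
    · intro n
      have ih := ihl hlpos
      have hA0 : (∑ k ∈ Finset.range l, u k * K (l + 0 - k)) = u l := by
        obtain ⟨l', rfl⟩ : ∃ l', l = l' + 1 := ⟨l - 1, by omega⟩
        rw [hren l']
        apply Finset.sum_congr rfl
        intro k hk
        rw [show l'+1+0-k = l'+1-k by omega]
        ring
      rw [show n + (l+1) = (n+1) + l by omega, ih (n+1), Finset.sum_range_succ']
      have hR : ∀ s ∈ Finset.range (n+1),
          (∑ k ∈ Finset.range (l+1), u k * K (l+1+s-k)) * u (n-s)
          = (∑ k ∈ Finset.range l, u k * K (l+(s+1)-k)) * u (n+1-(s+1))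
            + u l * (K (s+1) * u (n-s)) := by
        intro s hs
        rw [Finset.sum_range_succ, show l+1+s-l = s+1 by omega,
          show n+1-(s+1) = n-s by omega]
        have harg : ∀ k ∈ Finset.range l, u k * K (l+1+s-k) = u k * K (l+(s+1)-k) := by
          intro k hk
          rw [show l+1+s-k = l+(s+1)-k by omega]
        rw [Finset.sum_congr rfl harg]
        ring
      rw [Finset.sum_congr rfl hR, Finset.sum_add_distrib, ← Finset.mul_sum, ← base n, hA0,
        Nat.sub_zero]
end Renewal

/-- Let `τ` be a non-terminating renewal process with `P(τ₁ = n) = L(n) n^{-(1+α)}`,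
`α ∈ (0,1)`, `L` slowly varying, such that `2τ₁` is distributed as the first return time to
zero of a nearest-neighbor Markov chain on `ℕ₀` with `±1` increments. Then (via the coupling
of two copies of the chain started at times `−2ℓ` and `0`)
`0 ≤ u(n) − u(n+ℓ) ≤ u(n) P(τ₁ > n) ∑_{k=0}^{ℓ−1} u(k)`, where `u(m) := P(m ∈ τ)`. -/
theorem renewal_coupling_bound (α : ℝ) (hα : 0 < α ∧ α < 1) (L K u : ℕ → ℝ)
    (hL : SlowlyVarying L)
    (hK : ∀ n : ℕ, 1 ≤ n → K n = L n / (n : ℝ) ^ (1 + α)) (hK0 : K 0 = 0)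
    (hnorm : HasSum K 1)
    (p : ℕ → ℝ) (hp0 : p 0 = 1) (hp : ∀ i, 0 ≤ p i ∧ p i ≤ 1)
    (hfirst : ∀ n : ℕ, 1 ≤ n → K n = firstReturnProb p (2 * n))
    (hu0 : u 0 = 1)
    (hren : ∀ n : ℕ, u (n + 1) = ∑ m ∈ Finset.range (n + 1), K (n + 1 - m) * u m) :
    ∀ n ℓ : ℕ,
      0 ≤ u n - u (n + ℓ) ∧
      u n - u (n + ℓ) ≤
        u n * (∑' k : ℕ, if n < k then K k else 0) * ∑ k ∈ Finset.range ℓ, u k := by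
  have hKnn : ∀ n, 0 ≤ K n := by
    intro n
    cases n with
    | zero => rw [hK0]
    | succ m =>
      rw [hK (m+1) (by omega)]
      exact div_nonneg (hL.1 (m+1)).le (Real.rpow_nonneg (Nat.cast_nonneg _) _)
  have hunn : ∀ n, 0 ≤ u n := u_nonneg K u hKnn hu0 hren
  have hanti : Antitone u := u_anti K u p hp0 hp hfirst hu0 hren
  have sumKshift : ∀ a t : ℕ, ∑ s ∈ Finset.range t, K (a+s)
      = (∑ j ∈ Finset.range (a+t), K j) - ∑ j ∈ Finset.range a, K j := by
    intro a t
    induction t with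
    | zero => simp
    | succ t iht =>
      rw [Finset.sum_range_succ, iht, show a+(t+1) = (a+t)+1 by omega, Finset.sum_range_succ]
      ring
  intro n l
  constructor
  · have h := hanti (Nat.le_add_right n l)
    linarith
  · rcases Nat.eq_zero_or_pos l with rfl | hl
    · simp
    · obtain ⟨l', rfl⟩ : ∃ l', l = l'+1 := ⟨l-1, by omega⟩
      rw [(hasSum_tail K hnorm n).tsum_eq]
      have hid := idI K u hu0 hren (l'+1) (by omega) n
      have hVnn : ∀ s, 0 ≤ ∑ k ∈ Finset.range (l'+1), u k * K (l'+1+s-k) := by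
        intro s
        apply Finset.sum_nonneg
        intro k _
        exact mul_nonneg (hunn k) (hKnn _)
      have hstep1 : u n * (∑ s ∈ Finset.range (n+1),
            ∑ k ∈ Finset.range (l'+1), u k * K (l'+1+s-k))
          ≤ u (n + (l'+1)) := by
        rw [hid, Finset.mul_sum]
        apply Finset.sum_le_sum
        intro s hs
        simp only [Finset.mem_range] at hs
        calc u n * (∑ k ∈ Finset.range (l'+1), u k * K (l'+1+s-k))
            ≤ u (n-s) * (∑ k ∈ Finset.range (l'+1), u k * K (l'+1+s-k)) :=
              mul_le_mul_of_nonneg_right (hanti (by omega)) (hVnn s)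
          _ = _ := by ring
      have hSval : (∑ s ∈ Finset.range (n+1), ∑ k ∈ Finset.range (l'+1), u k * K (l'+1+s-k))
          = ∑ k ∈ Finset.range (l'+1),
              (u k * (1 - ∑ j ∈ Finset.range (l'-k+1), K j)
               - u k * (1 - ∑ j ∈ Finset.range (l'-k+n+1+1), K j)) := by
        rw [Finset.sum_comm]
        apply Finset.sum_congr rfl
        intro k hk
        simp only [Finset.mem_range] at hk
        have harg : ∀ s ∈ Finset.range (n+1), u k * K (l'+1+s-k) = u k * K ((l'-k+1)+s) := by
          intro s _
          rw [show l'+1+s-k = (l'-k+1)+s by omega]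
        rw [Finset.sum_congr rfl harg, ← Finset.mul_sum, sumKshift (l'-k+1) (n+1),
          show l'-k+1+(n+1) = l'-k+n+1+1 by omega]
        ring
      have hone := one_u_tail K u hK0 hu0 hren l'
      have h2 : 1 - (∑ s ∈ Finset.range (n+1), ∑ k ∈ Finset.range (l'+1), u k * K (l'+1+s-k))
          = ∑ k ∈ Finset.range (l'+1), u k * (1 - ∑ j ∈ Finset.range (l'-k+n+1+1), K j) := by
        rw [hSval, Finset.sum_sub_distrib, hone]
        ring
      have h3 : (∑ k ∈ Finset.range (l'+1), u k * (1 - ∑ j ∈ Finset.range (l'-k+n+1+1), K j))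
          ≤ (1 - ∑ k ∈ Finset.range (n+1), K k) * ∑ k ∈ Finset.range (l'+1), u k := by
        rw [Finset.mul_sum]
        apply Finset.sum_le_sum
        intro k _
        rw [mul_comm ((1:ℝ) - ∑ k ∈ Finset.range (n+1), K k) (u k)]
        exact mul_le_mul_of_nonneg_left (tail_anti K hKnn n (l'-k+n+1) (by omega)) (hunn k)
      calc u n - u (n + (l'+1))
          ≤ u n - u n * (∑ s ∈ Finset.range (n+1),
              ∑ k ∈ Finset.range (l'+1), u k * K (l'+1+s-k)) := by linarith [hstep1]
        _ = u n * (1 - ∑ s ∈ Finset.range (n+1),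
              ∑ k ∈ Finset.range (l'+1), u k * K (l'+1+s-k)) := by ring
        _ = u n * (∑ k ∈ Finset.range (l'+1),
              u k * (1 - ∑ j ∈ Finset.range (l'-k+n+1+1), K j)) := by rw [h2]
        _ ≤ u n * ((1 - ∑ k ∈ Finset.range (n+1), K k) * ∑ k ∈ Finset.range (l'+1), u k) :=
            mul_le_mul_of_nonneg_left h3 (hunn n)
        _ = u n * (1 - ∑ k ∈ Finset.range (n+1), K k) * ∑ k ∈ Finset.range (l'+1), u k := by
            ring
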